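/- Let |ψ₅⟩ be a 5-qubit AME stabilizer state. For every choice of three qubits {i,j,k} ⊆ {1,...,5}, there is exactly one non-identity stabilizer element supported exactly on {i,j,k}, and these (together with the identity and the weight-4 and weight-5 elements) account for all 2^5 = 32 stabilizer elements: 1 of weight 0, 10 of weight 3, 15 of weight 4, and 6 of weight 5. -/

import Mathlib

open Matrix

/-- The four single-qubit Pauli matrices `I, X, Y, Z` indexed by `Fin 4`. -/
def pauliMat : Fin 4 → Matrix (Fin 2) (Fin 2) ℂ :=
  ![1, !![0, 1; 1, 0], !![0, -Complex.I; Complex.I, 0], !![1, 0; 0, -1]]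

/-- The `n`-qubit Pauli string (tensor product of single-qubit Paulis) described by
`p : Fin n → Fin 4`, realized as a matrix on `(Fin n → Fin 2)`. -/
def pauliOp {n : ℕ} (p : Fin n → Fin 4) :
    Matrix (Fin n → Fin 2) (Fin n → Fin 2) ℂ :=
  Matrix.of fun i j => ∏ k, pauliMat (p k) (i k) (j k)

/-- `σ` is a signed Pauli string of weight `w` (support of size `w`). -/
def hasWeight {n : ℕ} (σ : Matrix (Fin n → Fin 2) (Fin n → Fin 2) ℂ) (w : ℕ) : Prop :=
  ∃ (ε : ℂ) (p : Fin n → Fin 4), (ε = 1 ∨ ε = -1) ∧ σ = ε • pauliOp p ∧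
    {i | p i ≠ 0}.ncard = w

/-- Klein-group addition on Pauli labels (xor table). -/
def mul4 : Fin 4 → Fin 4 → Fin 4 :=
  ![![0,1,2,3], ![1,0,3,2], ![2,3,0,1], ![3,2,1,0]]

/-- commutation sign, in ℤ. -/
def sgn4 : Fin 4 → Fin 4 → ℤ :=
  ![![1,1,1,1], ![1,1,-1,-1], ![1,-1,1,-1], ![1,-1,-1,1]]

/-- multiplication phase: pauliMat a * pauliMat b = ph4 a b • pauliMat (mul4 a b). -/
def ph4 : Fin 4 → Fin 4 → ℂ :=
  ![![1,1,1,1], ![1,1,Complex.I,-Complex.I], ![1,-Complex.I,1,Complex.I], ![1,Complex.I,-Complex.I,1]]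

lemma pauliMat_mul (a b : Fin 4) :
    pauliMat a * pauliMat b = ph4 a b • pauliMat (mul4 a b) := by
  fin_cases a <;> fin_cases b <;>
    simp [pauliMat, ph4, mul4, Matrix.one_fin_two] <;>
    · ext i j
      fin_cases i <;> fin_cases j <;>
        simp [Matrix.mul_apply, Fin.sum_univ_two, vecHead, vecTail] <;> ring_nf <;>
        simp [Complex.I_sq, Complex.ext_iff]

lemma tensor_mul {n : ℕ} (M N : Fin n → Matrix (Fin 2) (Fin 2) ℂ) :
    (Matrix.of fun i j : Fin n → Fin 2 => ∏ k, M k (i k) (j k)) *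
      (Matrix.of fun i j : Fin n → Fin 2 => ∏ k, N k (i k) (j k)) =
      Matrix.of fun i j : Fin n → Fin 2 => ∏ k, (M k * N k) (i k) (j k) := by
  ext i j
  simp only [Matrix.mul_apply, Matrix.of_apply]
  calc ∑ l : Fin n → Fin 2, (∏ k, M k (i k) (l k)) * ∏ k, N k (l k) (j k)
      = ∑ l : Fin n → Fin 2, ∏ k, (M k (i k) (l k) * N k (l k) (j k)) := by
        simp [Finset.prod_mul_distrib]
    _ = ∏ k, ∑ c : Fin 2, M k (i k) c * N k c (j k) := by
        rw [Finset.prod_univ_sum, Fintype.piFinset_univ]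
    _ = _ := by simp [Matrix.mul_apply]

lemma tensor_trace {n : ℕ} (M : Fin n → Matrix (Fin 2) (Fin 2) ℂ) :
    (Matrix.of fun i j : Fin n → Fin 2 => ∏ k, M k (i k) (j k)).trace
      = ∏ k, (M k).trace := by
  simp only [Matrix.trace, Matrix.diag, Matrix.of_apply]
  symm
  rw [Finset.prod_univ_sum, Fintype.piFinset_univ]

lemma pauliOp_mul (p q : Fin 5 → Fin 4) :
    pauliOp p * pauliOp q
      = (∏ k, ph4 (p k) (q k)) • pauliOp (fun k => mul4 (p k) (q k)) := by
  show (Matrix.of fun i j : Fin 5 → Fin 2 => ∏ k, pauliMat (p k) (i k) (j k)) *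
      (Matrix.of fun i j : Fin 5 → Fin 2 => ∏ k, pauliMat (q k) (i k) (j k)) = _
  rw [tensor_mul]
  ext i j
  simp only [Matrix.of_apply, Matrix.smul_apply, pauliOp, smul_eq_mul]
  rw [Finset.prod_congr rfl (fun k _ => show (pauliMat (p k) * pauliMat (q k)) (i k) (j k)
      = ph4 (p k) (q k) * pauliMat (mul4 (p k) (q k)) (i k) (j k) by rw [pauliMat_mul]; simp)]
  rw [Finset.prod_mul_distrib]

lemma pauliMat_trace (a : Fin 4) :
    (pauliMat a).trace = if a = 0 then 2 else 0 := by
  fin_cases a <;> simp [pauliMat, Matrix.trace_fin_two]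

lemma pauliOp_trace (p : Fin 5 → Fin 4) :
    (pauliOp p).trace = if p = (fun _ => 0) then 32 else 0 := by
  show (Matrix.of fun i j : Fin 5 → Fin 2 => ∏ k, pauliMat (p k) (i k) (j k)).trace = _
  rw [tensor_trace]
  by_cases h : p = fun _ => 0
  · subst h; simp [pauliMat_trace]; norm_num
  · obtain ⟨k, hk⟩ : ∃ k, p k ≠ 0 := by
      by_contra hc; push_neg at hc; exact h (funext hc)
    rw [if_neg h]
    exact Finset.prod_eq_zero (Finset.mem_univ k) (by simp [pauliMat_trace, hk])

lemma mul4_self (a : Fin 4) : mul4 a a = 0 := by fin_cases a <;> rfl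
lemma mul4_eq_zero {a b : Fin 4} : mul4 a b = 0 ↔ a = b := by
  fin_cases a <;> fin_cases b <;> simp [mul4] <;> decide
lemma ph4_self (a : Fin 4) : ph4 a a = 1 := by fin_cases a <;> rfl
lemma ph4_comm (a b : Fin 4) : ph4 a b = (sgn4 a b : ℂ) * ph4 b a := by
  fin_cases a <;> fin_cases b <;> simp [ph4, sgn4, vecHead, vecTail] <;> ring
lemma mul4_comm (a b : Fin 4) : mul4 a b = mul4 b a := by
  fin_cases a <;> fin_cases b <;> rfl

/-- trace pairing: uniqueness of scaled Pauli-string representations. -/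
lemma pauliOp_unique {c d : ℂ} {p q : Fin 5 → Fin 4} (hd : d ≠ 0)
    (h : c • pauliOp p = d • pauliOp q) : p = q ∧ c = d := by
  have tr_self : ∀ r : Fin 5 → Fin 4, (pauliOp r * pauliOp r).trace = 32 := by
    intro r
    rw [pauliOp_mul]
    simp [mul4_self, ph4_self, Matrix.trace_smul, pauliOp_trace]
  have h2 : c * (pauliOp p * pauliOp q).trace = d * 32 := by
    have := congrArg (fun M => (M * pauliOp q).trace) h
    simpa [Matrix.smul_mul, Matrix.trace_smul, tr_self q, smul_eq_mul] using this
  have htr : (pauliOp p * pauliOp q).trace ≠ 0 := by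
    intro h0
    rw [h0, mul_zero] at h2
    exact hd (by linear_combination -h2/32)
  have hpq : p = q := by
    rw [pauliOp_mul, Matrix.trace_smul, pauliOp_trace, smul_eq_mul] at htr
    by_cases hif : (fun k => mul4 (p k) (q k)) = (fun _ => 0)
    · funext k
      exact mul4_eq_zero.mp (congrFun hif k)
    · simp [hif] at htr
  refine ⟨hpq, ?_⟩
  subst hpq
  rw [tr_self p] at h2
  have : (32:ℂ) ≠ 0 := by norm_num
  field_simp at h2
  exact h2

lemma pauliOp_zero : pauliOp (fun _ : Fin 5 => (0 : Fin 4)) = 1 := by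
  ext i j
  simp only [pauliOp, Matrix.of_apply, pauliMat, Matrix.cons_val_zero, Matrix.one_apply]
  by_cases h : i = j
  · subst h; simp
  · rw [if_neg h]
    obtain ⟨k, hk⟩ : ∃ k, i k ≠ j k := by
      by_contra hc; push_neg at hc; exact h (funext hc)
    exact Finset.prod_eq_zero (Finset.mem_univ k) (by simp [Matrix.one_apply, hk])

lemma pauliOp_swap (p q : Fin 5 → Fin 4) :
    pauliOp p * pauliOp q = ((∏ k, sgn4 (p k) (q k) : ℤ) : ℂ) • (pauliOp q * pauliOp p) := by
  rw [pauliOp_mul, pauliOp_mul, smul_smul]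
  have h1 : (fun k => mul4 (p k) (q k)) = (fun k => mul4 (q k) (p k)) :=
    funext fun k => mul4_comm _ _
  rw [h1]
  congr 1
  push_cast
  rw [← Finset.prod_mul_distrib]
  exact Finset.prod_congr rfl fun k _ => ph4_comm _ _

-- combinatorial layer
def suppP (p : Fin 5 → Fin 4) : Finset (Fin 5) := Finset.univ.filter (fun k => p k ≠ 0)
def wtP (p : Fin 5 → Fin 4) : ℕ := (suppP p).card
def chiP (p q : Fin 5 → Fin 4) : ℤ := ∏ k, sgn4 (p k) (q k)

lemma sgn4_sq (a b : Fin 4) : sgn4 a b * sgn4 a b = 1 := by revert a b; decide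
lemma sgn4_add (a b c : Fin 4) : sgn4 a (mul4 b c) = sgn4 a b * sgn4 a c := by revert a b c; decide
lemma mul4_cancel (a b : Fin 4) : mul4 a (mul4 a b) = b := by revert a b; decide
lemma sgn4_colsum (b : Fin 4) : ∑ a : Fin 4, sgn4 a b = if b = 0 then 4 else 0 := by
  revert b; decide
lemma sgn4_wcolsum (x : ℤ) (b : Fin 4) :
    ∑ a : Fin 4, (if a = 0 then 1 else x) * sgn4 a b = if b = 0 then 1 + 3*x else 1 - x := by
  fin_cases b <;> simp [Fin.sum_univ_four, sgn4, vecHead, vecTail] <;> ring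

lemma chi_sq (p q : Fin 5 → Fin 4) : chiP p q * chiP p q = 1 := by
  rw [chiP, ← Finset.prod_mul_distrib]
  simp [sgn4_sq]
lemma chi_pm (p q : Fin 5 → Fin 4) : chiP p q = 1 ∨ chiP p q = -1 :=
  mul_self_eq_one_iff.mp (chi_sq p q)
lemma chi_add (p q r : Fin 5 → Fin 4) :
    chiP p (fun k => mul4 (q k) (r k)) = chiP p q * chiP p r := by
  rw [chiP, chiP, chiP, ← Finset.prod_mul_distrib]
  exact Finset.prod_congr rfl fun k _ => sgn4_add _ _ _

lemma wt_le_five (p : Fin 5 → Fin 4) : wtP p ≤ 5 := by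
  have := Finset.card_filter_le (Finset.univ : Finset (Fin 5)) (fun k => p k ≠ 0)
  simpa [wtP, suppP] using this

lemma wt_eq_zero {p : Fin 5 → Fin 4} : wtP p = 0 ↔ p = (fun _ => 0) := by
  constructor
  · intro h
    funext k
    by_contra hk
    have : k ∈ suppP p := by simp [suppP, hk]
    rw [Finset.card_eq_zero.mp h] at this
    simp at this
  · intro h; subst h; simp [wtP, suppP]

lemma prod_ite_wt (x : ℤ) (p : Fin 5 → Fin 4) :
    ∏ k, (if p k = 0 then 1 else x) = x ^ wtP p := by
  rw [Finset.prod_ite, Finset.prod_const, Finset.prod_const, one_pow, one_mul]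
  rfl

lemma prod_ite_wt' (A B : ℤ) (q : Fin 5 → Fin 4) :
    ∏ k, (if q k = 0 then A else B) = A ^ (5 - wtP q) * B ^ wtP q := by
  rw [Finset.prod_ite, Finset.prod_const, Finset.prod_const]
  have h := Finset.card_filter_add_card_filter_not
    (s := (Finset.univ : Finset (Fin 5))) (p := fun k => q k = 0)
  have hwt : (Finset.univ.filter (fun k => ¬ q k = 0)).card = wtP q := rfl
  simp only [Finset.card_univ, Fintype.card_fin] at h
  have h5 : (Finset.univ.filter (fun k => q k = 0)).card = 5 - wtP q := by omega
  rw [h5, hwt]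

lemma chi_colsum (q : Fin 5 → Fin 4) :
    ∑ p : Fin 5 → Fin 4, chiP p q = if q = (fun _ => 0) then 1024 else 0 := by
  have : ∑ p : Fin 5 → Fin 4, chiP p q = ∏ k, ∑ a : Fin 4, sgn4 a (q k) := by
    symm
    rw [Finset.prod_univ_sum, Fintype.piFinset_univ]
    rfl
  rw [this]
  by_cases h : q = fun _ => 0
  · subst h
    simp only [if_pos rfl, sgn4_colsum]
    norm_num
  · obtain ⟨k, hk⟩ : ∃ k, q k ≠ 0 := by
      by_contra hc; push_neg at hc; exact h (funext hc)
    rw [if_neg h]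
    exact Finset.prod_eq_zero (Finset.mem_univ k) (by simp [sgn4_colsum, hk])

lemma chi_wcolsum (x : ℤ) (q : Fin 5 → Fin 4) :
    ∑ p : Fin 5 → Fin 4, x ^ wtP p * chiP p q
      = (1 + 3*x) ^ (5 - wtP q) * (1 - x) ^ wtP q := by
  have : ∑ p : Fin 5 → Fin 4, x ^ wtP p * chiP p q
      = ∏ k, ∑ a : Fin 4, (if a = 0 then 1 else x) * sgn4 a (q k) := by
    symm
    rw [Finset.prod_univ_sum, Fintype.piFinset_univ]
    apply Finset.sum_congr rfl
    intro p _
    rw [← prod_ite_wt x p, chiP, ← Finset.prod_mul_distrib]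
  rw [this]
  rw [Finset.prod_congr rfl (fun k _ => sgn4_wcolsum x (q k))]
  exact prod_ite_wt' _ _ q

lemma core (P : Finset (Fin 5 → Fin 4))
    (h0 : (fun _ => 0) ∈ P) (hPcard : P.card = 32)
    (hclosed : ∀ p ∈ P, ∀ q ∈ P, (fun k => mul4 (p k) (q k)) ∈ P)
    (hcomm : ∀ p ∈ P, ∀ q ∈ P, chiP p q = 1)
    (hwt3 : ∀ p ∈ P, p ≠ (fun _ => 0) → 3 ≤ wtP p) :
    (∀ T : Finset (Fin 5), T.card = 3 → (P.filter (fun p => suppP p = T)).card = 1) ∧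
    (P.filter (fun p => wtP p = 0)).card = 1 ∧
    (P.filter (fun p => wtP p = 3)).card = 10 ∧
    (P.filter (fun p => wtP p = 4)).card = 15 ∧
    (P.filter (fun p => wtP p = 5)).card = 6 := by
  classical
  -- non-orthogonal rows sum to zero
  have zero_sum : ∀ p : Fin 5 → Fin 4, (∃ q0 ∈ P, chiP p q0 = -1) →
      ∑ q ∈ P, chiP p q = 0 := by
    rintro p ⟨q0, hq0, hneg⟩
    have hbij : ∑ q ∈ P, chiP p q = ∑ q ∈ P, chiP p (fun k => mul4 (q0 k) (q k)) := by
      apply Finset.sum_nbij' (i := fun q => fun k => mul4 (q0 k) (q k))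
        (j := fun q => fun k => mul4 (q0 k) (q k))
      · intro a ha; exact hclosed q0 hq0 a ha
      · intro a ha; exact hclosed q0 hq0 a ha
      · intro a _; funext k; exact mul4_cancel _ _
      · intro a _; funext k; exact mul4_cancel _ _
      · intro a _; exact congrArg (chiP p) (funext fun k => (mul4_cancel _ _).symm)
    have : ∑ q ∈ P, chiP p (fun k => mul4 (q0 k) (q k)) = -∑ q ∈ P, chiP p q := by
      rw [← Finset.sum_neg_distrib]
      apply Finset.sum_congr rfl
      intro q _
      rw [chi_add, hneg]
      ring
    linarith [hbij, this]
  -- the sum over q ∈ P of chiP p q is 32 ·[p ⊥ P]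
  set O : Finset (Fin 5 → Fin 4) := Finset.univ.filter (fun p => ∀ q ∈ P, chiP p q = 1) with hO
  have sum_of_mem : ∀ p ∈ O, ∑ q ∈ P, chiP p q = 32 := by
    intro p hp
    rw [hO, Finset.mem_filter] at hp
    rw [Finset.sum_congr rfl (fun q hq => hp.2 q hq)]
    simp [hPcard]
  have sum_of_not_mem : ∀ p ∉ O, ∑ q ∈ P, chiP p q = 0 := by
    intro p hp
    rw [hO, Finset.mem_filter] at hp
    push_neg at hp
    obtain ⟨q0, hq0, hne⟩ := hp (Finset.mem_univ p)
    exact zero_sum p ⟨q0, hq0, (chi_pm p q0).resolve_left hne⟩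
  have hdouble : (1024 : ℤ) = 32 * O.card := by
    have h1 : ∑ q ∈ P, ∑ p : Fin 5 → Fin 4, chiP p q = 1024 := by
      rw [Finset.sum_congr rfl (fun q _ => chi_colsum q)]
      rw [Finset.sum_ite_eq' P (fun _ => 0) (fun _ => (1024:ℤ))]
      simp [h0]
    have h2 : ∑ q ∈ P, ∑ p : Fin 5 → Fin 4, chiP p q
        = ∑ p : Fin 5 → Fin 4, ∑ q ∈ P, chiP p q := Finset.sum_comm
    have h3 : ∑ p : Fin 5 → Fin 4, ∑ q ∈ P, chiP p q = 32 * O.card := by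
      rw [← Finset.sum_filter_add_sum_filter_not Finset.univ (fun p => p ∈ O)]
      have e1 : ∑ p ∈ Finset.univ.filter (fun p => p ∈ O), ∑ q ∈ P, chiP p q
          = 32 * O.card := by
        rw [Finset.sum_congr rfl (fun p hp => sum_of_mem p (Finset.mem_filter.mp hp).2)]
        rw [Finset.sum_const]
        have : Finset.univ.filter (fun p => p ∈ O) = O := by
          ext p; simp
        rw [this]
        push_cast
        ring
      have e2 : ∑ p ∈ Finset.univ.filter (fun p => p ∉ O), ∑ q ∈ P, chiP p q = 0 := by
        rw [Finset.sum_congr rfl (fun p hp => sum_of_not_mem p (Finset.mem_filter.mp hp).2)]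
        simp
      rw [e1, e2, add_zero]
    rw [← h3, ← h2, h1]
  have hOcard : O.card = 32 := by
    have : (O.card : ℤ) = 32 := by linarith
    exact_mod_cast this
  have hPO : P = O := by
    apply Finset.eq_of_subset_of_card_le
    · intro p hp
      rw [hO, Finset.mem_filter]
      exact ⟨Finset.mem_univ p, fun q hq => hcomm p hp q hq⟩
    · rw [hOcard, hPcard]
  have inner_sum : ∀ p : Fin 5 → Fin 4, ∑ q ∈ P, chiP p q = if p ∈ P then 32 else 0 := by
    intro p
    by_cases hp : p ∈ P
    · rw [if_pos hp]; exact sum_of_mem p (hPO ▸ hp)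
    · rw [if_neg hp]; exact sum_of_not_mem p (hPO ▸ hp)
  -- master identity
  have master : ∀ x : ℤ, 32 * ∑ q ∈ P, x ^ wtP q
      = ∑ q ∈ P, (1 + 3*x) ^ (5 - wtP q) * (1 - x) ^ wtP q := by
    intro x
    calc 32 * ∑ q ∈ P, x ^ wtP q
        = ∑ p : Fin 5 → Fin 4, x ^ wtP p * (∑ q ∈ P, chiP p q) := by
          rw [Finset.sum_congr rfl (fun p (_ : p ∈ Finset.univ) => by rw [inner_sum p])]
          simp only [mul_ite, mul_zero]
          rw [Finset.sum_ite_mem, Finset.univ_inter, Finset.mul_sum]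
          exact Finset.sum_congr rfl fun q _ => by ring
      _ = ∑ q ∈ P, ∑ p : Fin 5 → Fin 4, x ^ wtP p * chiP p q := by
          simp only [Finset.mul_sum]
          exact Finset.sum_comm
      _ = ∑ q ∈ P, (1 + 3*x) ^ (5 - wtP q) * (1 - x) ^ wtP q :=
          Finset.sum_congr rfl fun q _ => chi_wcolsum x q
  -- weight distribution
  set A : ℕ → ℕ := fun w => (P.filter (fun p => wtP p = w)).card with hA
  have fiber : ∀ f : ℕ → ℤ, ∑ q ∈ P, f (wtP q) = ∑ w ∈ Finset.range 6, (A w : ℤ) * f w := by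
    intro f
    rw [← Finset.sum_fiberwise_of_maps_to (g := wtP) (t := Finset.range 6)
      (fun q _ => Finset.mem_range.mpr (Nat.lt_succ_of_le (wt_le_five q))) (f := fun q => f (wtP q))]
    apply Finset.sum_congr rfl
    intro w _
    rw [Finset.sum_congr rfl (fun q hq => by rw [(Finset.mem_filter.mp hq).2])]
    rw [Finset.sum_const, nsmul_eq_mul]
  have hA0 : A 0 = 1 := by
    simp only [hA]
    have : P.filter (fun p => wtP p = 0) = {fun _ => 0} := by
      ext p
      simp only [Finset.mem_filter, Finset.mem_singleton]
      constructor
      · rintro ⟨_, hw⟩; exact wt_eq_zero.mp hw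
      · rintro rfl; exact ⟨h0, wt_eq_zero.mpr rfl⟩
    rw [this, Finset.card_singleton]
  have hA1 : A 1 = 0 := by
    simp only [hA]
    rw [Finset.card_eq_zero, Finset.filter_eq_empty_iff]
    intro p hp hw
    have hne : p ≠ fun _ => 0 := fun h => by simp [wt_eq_zero.mpr h] at hw
    have := hwt3 p hp hne
    omega
  have hA2 : A 2 = 0 := by
    simp only [hA]
    rw [Finset.card_eq_zero, Finset.filter_eq_empty_iff]
    intro p hp hw
    have hne : p ≠ fun _ => 0 := fun h => by simp [wt_eq_zero.mpr h] at hw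
    have := hwt3 p hp hne
    omega
  have hAsum : ∑ w ∈ Finset.range 6, A w = 32 := by
    rw [← hPcard]
    exact (Finset.card_eq_sum_card_fiberwise
      (fun q _ => Finset.mem_range.mpr (Nat.lt_succ_of_le (wt_le_five q)))).symm
  -- three evaluations
  have e1 := master 1
  have e2 := master (-1)
  have e3 := master 3
  rw [fiber (fun w => 1 ^ w), fiber (fun w => (1 + 3*1) ^ (5 - w) * (1 - 1) ^ w)] at e1
  rw [fiber (fun w => (-1) ^ w), fiber (fun w => (1 + 3*(-1)) ^ (5 - w) * (1 - (-1)) ^ w)] at e2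
  rw [fiber (fun w => 3 ^ w), fiber (fun w => (1 + 3*3) ^ (5 - w) * (1 - 3) ^ w)] at e3
  simp only [Finset.sum_range_succ, Finset.range_one, Finset.sum_singleton] at e1 e2 e3
  rw [hA0, hA1, hA2] at e1 e2 e3
  norm_num at e1 e2 e3
  have hAs : A 3 = 10 ∧ A 4 = 15 ∧ A 5 = 6 := by omega
  -- every 3-set supports an element
  have exist_T : ∀ T : Finset (Fin 5), T.card = 3 → ∃ p ∈ P, suppP p = T := by
    intro T hT
    by_contra hc
    push_neg at hc
    -- then no nonzero element supported inside T
    have hN : ∀ p ∈ P, suppP p ⊆ T → p = fun _ => 0 := by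
      intro p hp hsub
      by_contra hne
      have h3 : 3 ≤ wtP p := hwt3 p hp hne
      have : suppP p = T := Finset.eq_of_subset_of_card_le hsub (by rw [hT]; exact h3)
      exact hc p hp this
    -- so restriction to the complement of T is injective on P
    set f : (Fin 5 → Fin 4) → (Fin 5 → Fin 4) := fun p k => if k ∈ T then 0 else p k with hf
    have hinj : Set.InjOn f P := by
      intro p hp q hq hfeq
      have hr : (fun k => mul4 (p k) (q k)) ∈ P := hclosed p hp q hq
      have hsub : suppP (fun k => mul4 (p k) (q k)) ⊆ T := by
        intro k hk
        simp only [suppP, Finset.mem_filter] at hk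
        by_contra hkT
        have : p k = q k := by
          have := congrFun hfeq k
          simpa [hf, hkT] using this
        exact hk.2 (this ▸ mul4_self (q k) ▸ by rw [this, mul4_self])
      have hzero := hN _ hr hsub
      funext k
      exact mul4_eq_zero.mp (congrFun hzero k)
    have himage : (P.image f) ⊆ Fintype.piFinset (fun k => if k ∈ T then {0} else Finset.univ) := by
      intro g hg
      obtain ⟨p, hp, rfl⟩ := Finset.mem_image.mp hg
      rw [Fintype.mem_piFinset]
      intro k
      by_cases hk : k ∈ T <;> simp [hf, hk]
    have hcard16 : (Fintype.piFinset (fun k : Fin 5 => if k ∈ T then ({0} : Finset (Fin 4)) else Finset.univ)).card = 16 := by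
      rw [Fintype.card_piFinset]
      have : ∀ k : Fin 5, (if k ∈ T then ({0} : Finset (Fin 4)) else Finset.univ).card
          = if k ∈ T then 1 else 4 := by
        intro k; by_cases hk : k ∈ T <;> simp [hk]
      rw [Finset.prod_congr rfl (fun k _ => this k)]
      rw [Finset.prod_ite, Finset.prod_const, Finset.prod_const, one_pow, one_mul]
      have : (Finset.univ.filter (fun k => ¬ k ∈ T)).card = 2 := by
        have h1 := Finset.card_filter_add_card_filter_not
          (s := (Finset.univ : Finset (Fin 5))) (p := fun k => k ∈ T)
        have h2 : (Finset.univ.filter (fun k => k ∈ T)).card = 3 := by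
          rw [Finset.filter_univ_mem]; exact hT
        simp only [Finset.card_univ, Fintype.card_fin] at h1
        omega
      rw [this]
      norm_num
    have : P.card ≤ 16 := by
      calc P.card = (P.image f).card := (Finset.card_image_of_injOn hinj).symm
        _ ≤ _ := Finset.card_le_card himage
        _ = 16 := hcard16
    omega
  -- fibers over 3-sets
  have hmapsto : ∀ q ∈ P.filter (fun p => wtP p = 3), suppP q ∈ Finset.powersetCard 3 Finset.univ := by
    intro q hq
    rw [Finset.mem_powersetCard_univ]
    exact (Finset.mem_filter.mp hq).2
  have hfibersum : ∑ T ∈ Finset.powersetCard 3 Finset.univ,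
      (P.filter (fun p => suppP p = T)).card = 10 := by
    have h1 := Finset.card_eq_sum_card_fiberwise hmapsto
    have h2 : ∀ T ∈ Finset.powersetCard 3 (Finset.univ : Finset (Fin 5)),
        ((P.filter (fun p => wtP p = 3)).filter (fun p => suppP p = T))
          = P.filter (fun p => suppP p = T) := by
      intro T hT
      rw [Finset.mem_powersetCard_univ] at hT
      ext p
      simp only [Finset.mem_filter]
      simp only [wtP]
      constructor
      · rintro ⟨⟨h1', _⟩, h3'⟩; exact ⟨h1', h3'⟩
      · rintro ⟨h1', h3'⟩; exact ⟨⟨h1', by rw [h3', hT]⟩, h3'⟩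
    rw [Finset.sum_congr rfl (fun T hT => congrArg Finset.card (h2 T hT))] at h1
    rw [← h1]
    exact hAs.1
  have hncard3 : (Finset.powersetCard 3 (Finset.univ : Finset (Fin 5))).card = 10 := by
    rw [Finset.card_powersetCard]
    simp
    decide
  have each_one : ∀ T : Finset (Fin 5), T.card = 3 →
      (P.filter (fun p => suppP p = T)).card = 1 := by
    intro T hT
    have hTmem : T ∈ Finset.powersetCard 3 (Finset.univ : Finset (Fin 5)) :=
      Finset.mem_powersetCard_univ.mpr hT
    have hge1 : ∀ T' ∈ Finset.powersetCard 3 (Finset.univ : Finset (Fin 5)),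
        1 ≤ (P.filter (fun p => suppP p = T')).card := by
      intro T' hT'
      obtain ⟨p, hp, hps⟩ := exist_T T' (Finset.mem_powersetCard_univ.mp hT')
      exact Finset.card_pos.mpr ⟨p, Finset.mem_filter.mpr ⟨hp, hps⟩⟩
    have hsplit : (P.filter (fun p => suppP p = T)).card
        + ∑ T' ∈ (Finset.powersetCard 3 (Finset.univ : Finset (Fin 5))).erase T,
            (P.filter (fun p => suppP p = T')).card
        = ∑ T' ∈ Finset.powersetCard 3 (Finset.univ : Finset (Fin 5)),
            (P.filter (fun p => suppP p = T')).card :=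
      Finset.add_sum_erase _ (fun T' => (P.filter (fun p => suppP p = T')).card) hTmem
    have herase : 9 ≤ ∑ T' ∈ (Finset.powersetCard 3 (Finset.univ : Finset (Fin 5))).erase T,
        (P.filter (fun p => suppP p = T')).card := by
      calc (9:ℕ) = ((Finset.powersetCard 3 (Finset.univ : Finset (Fin 5))).erase T).card := by
            rw [Finset.card_erase_of_mem hTmem, hncard3]
        _ ≤ _ := by
            have := Finset.card_nsmul_le_sum
              ((Finset.powersetCard 3 (Finset.univ : Finset (Fin 5))).erase T)
              (fun T' => (P.filter (fun p => suppP p = T')).card) 1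
              (fun T' hT' => hge1 T' (Finset.mem_of_mem_erase hT'))
            simpa using this
    have := hge1 T hTmem
    rw [hfibersum] at hsplit
    omega
  exact ⟨each_one, hA0, hAs.1, hAs.2.1, hAs.2.2⟩

lemma ncard_supp (p : Fin 5 → Fin 4) : {i | p i ≠ 0}.ncard = wtP p := by
  rw [wtP, ← Set.ncard_coe_finset]
  congr 1
  ext i
  simp [suppP]


/-- For a 5-qubit AME stabilizer state: every triple of qubits
supports exactly one non-identity stabilizer element, and the weight distribution of
the 32 stabilizer elements is `1 + 10 z³ + 15 z⁴ + 6 z⁵`. -/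
theorem stmt18
    (v : (Fin 5 → Fin 2) → ℂ) (hv : star v ⬝ᵥ v = 1)
    (S : Finset (Matrix (Fin 5 → Fin 2) (Fin 5 → Fin 2) ℂ))
    (hcard : S.card = 32)
    (hone : (1 : Matrix (Fin 5 → Fin 2) (Fin 5 → Fin 2) ℂ) ∈ S)
    (hmul : ∀ σ ∈ S, ∀ τ ∈ S, σ * τ ∈ S)
    (hpauli : ∀ σ ∈ S, ∃ (ε : ℂ) (p : Fin 5 → Fin 4), (ε = 1 ∨ ε = -1) ∧ σ = ε • pauliOp p)
    (hstab : ∀ σ ∈ S, σ.mulVec v = v)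
    (hAME : ∀ p : Fin 5 → Fin 4, p ≠ (fun _ => 0) → {i | p i ≠ 0}.ncard ≤ 2 →
      star v ⬝ᵥ (pauliOp p).mulVec v = 0) :
    (∀ T : Finset (Fin 5), T.card = 3 →
      {σ ∈ (S : Set (Matrix (Fin 5 → Fin 2) (Fin 5 → Fin 2) ℂ)) |
        ∃ (ε : ℂ) (p : Fin 5 → Fin 4), (ε = 1 ∨ ε = -1) ∧ σ = ε • pauliOp p ∧
          {i | p i ≠ 0} = (T : Set (Fin 5))}.ncard = 1) ∧
    {σ ∈ (S : Set (Matrix (Fin 5 → Fin 2) (Fin 5 → Fin 2) ℂ)) | hasWeight σ 0}.ncard = 1 ∧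
    {σ ∈ (S : Set (Matrix (Fin 5 → Fin 2) (Fin 5 → Fin 2) ℂ)) | hasWeight σ 3}.ncard = 10 ∧
    {σ ∈ (S : Set (Matrix (Fin 5 → Fin 2) (Fin 5 → Fin 2) ℂ)) | hasWeight σ 4}.ncard = 15 ∧
    {σ ∈ (S : Set (Matrix (Fin 5 → Fin 2) (Fin 5 → Fin 2) ℂ)) | hasWeight σ 5}.ncard = 6 := by
  classical
  have hv0 : v ≠ 0 := by
    intro h
    rw [h] at hv
    simp at hv
  -- no matrix and its negative can both be in S
  have hnotboth : ∀ M : Matrix (Fin 5 → Fin 2) (Fin 5 → Fin 2) ℂ,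
      M ∈ S → -M ∈ S → False := by
    intro M h1 h2
    have e1 := hstab M h1
    have e2 := hstab (-M) h2
    rw [Matrix.neg_mulVec, e1] at e2
    exact hv0 (by linear_combination (norm := module) -(1/2 : ℂ) • e2)
  -- every σ ∈ S is ± a pauli string
  have hrep : ∀ σ ∈ S, ∃ p, σ = pauliOp p ∨ σ = -pauliOp p := by
    intro σ hσ
    obtain ⟨ε, p, hε, hσp⟩ := hpauli σ hσ
    refine ⟨p, ?_⟩
    rcases hε with rfl | rfl
    · left; rw [hσp, one_smul]
    · right; rw [hσp, neg_smul, one_smul]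
  set P : Finset (Fin 5 → Fin 4) :=
    Finset.univ.filter (fun p => pauliOp p ∈ S ∨ (-pauliOp p) ∈ S) with hPdef
  set e : (Fin 5 → Fin 4) → Matrix (Fin 5 → Fin 2) (Fin 5 → Fin 2) ℂ :=
    fun p => if pauliOp p ∈ S then pauliOp p else -pauliOp p with he
  have heS : ∀ p ∈ P, e p ∈ S := by
    intro p hp
    rw [hPdef, Finset.mem_filter] at hp
    rcases hp.2 with h | h
    · rw [he]; simp only [if_pos h]; exact h
    · rw [he]
      by_cases h' : pauliOp p ∈ S
      · simp only [if_pos h']; exact h'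
      · simp only [if_neg h']; exact h
  have hesign : ∀ p, ∃ c : ℂ, (c = 1 ∨ c = -1) ∧ e p = c • pauliOp p := by
    intro p
    rw [he]
    by_cases h : pauliOp p ∈ S
    · exact ⟨1, Or.inl rfl, by simp [h]⟩
    · exact ⟨-1, Or.inr rfl, by simp [h]⟩
  have hinj : Set.InjOn e (P : Set (Fin 5 → Fin 4)) := by
    intro p _ q _ hpq
    obtain ⟨c, hc, hcp⟩ := hesign p
    obtain ⟨d, hd, hdq⟩ := hesign q
    rw [hcp, hdq] at hpq
    have hd0 : d ≠ 0 := by rcases hd with rfl | rfl <;> norm_num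
    exact (pauliOp_unique hd0 hpq).1
  have himg : S = P.image e := by
    ext σ
    constructor
    · intro hσ
      obtain ⟨p, hp⟩ := hrep σ hσ
      have hpP : p ∈ P := by
        rw [hPdef, Finset.mem_filter]
        exact ⟨Finset.mem_univ _, by rcases hp with rfl | rfl; exacts [Or.inl hσ, Or.inr hσ]⟩
      refine Finset.mem_image.mpr ⟨p, hpP, ?_⟩
      rcases hp with rfl | rfl
      · rw [he]; simp [hσ]
      · rw [he]
        by_cases h' : pauliOp p ∈ S
        · exact absurd hσ (fun h2 => hnotboth _ h' h2)
        · simp [h']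
    · intro hσ
      obtain ⟨p, hp, rfl⟩ := Finset.mem_image.mp hσ
      exact heS p hp
  have hPcard : P.card = 32 := by
    rw [himg, Finset.card_image_of_injOn hinj] at hcard
    exact hcard
  have h0P : (fun _ => 0) ∈ P := by
    rw [hPdef, Finset.mem_filter]
    exact ⟨Finset.mem_univ _, Or.inl (by rw [pauliOp_zero]; exact hone)⟩
  -- membership criterion
  have hmemP : ∀ (c : ℂ) (p : Fin 5 → Fin 4), (c = 1 ∨ c = -1) →
      c • pauliOp p ∈ S → p ∈ P := by
    intro c p hc hmem
    rw [hPdef, Finset.mem_filter]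
    refine ⟨Finset.mem_univ _, ?_⟩
    rcases hc with rfl | rfl
    · left; rwa [one_smul] at hmem
    · right; rwa [neg_smul, one_smul] at hmem
  have hclosed : ∀ p ∈ P, ∀ q ∈ P, (fun k => mul4 (p k) (q k)) ∈ P := by
    intro p hp q hq
    obtain ⟨c, hc, hcp⟩ := hesign p
    obtain ⟨d, hd, hdq⟩ := hesign q
    have hmem : e p * e q ∈ S := hmul _ (heS p hp) _ (heS q hq)
    obtain ⟨ε, r, hε, hr⟩ := hpauli _ hmem
    have : e p * e q = (c * d * ∏ k, ph4 (p k) (q k)) • pauliOp (fun k => mul4 (p k) (q k)) := by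
      rw [hcp, hdq, Matrix.smul_mul, Matrix.mul_smul, pauliOp_mul, smul_smul, smul_smul]
    have hε0 : ε ≠ 0 := by rcases hε with rfl | rfl <;> norm_num
    have heq : (c * d * ∏ k, ph4 (p k) (q k)) • pauliOp (fun k => mul4 (p k) (q k))
        = ε • pauliOp r := by rw [← this, hr]
    obtain ⟨hrq, -⟩ := pauliOp_unique hε0 heq
    have hrP : r ∈ P := hmemP ε r hε (hr ▸ hmem)
    rw [hrq]
    exact hrP
  have hcomm : ∀ p ∈ P, ∀ q ∈ P, chiP p q = 1 := by
    intro p hp q hq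
    obtain ⟨c, hc, hcp⟩ := hesign p
    obtain ⟨d, hd, hdq⟩ := hesign q
    have h1 : (e p * e q).mulVec v = v := hstab _ (hmul _ (heS p hp) _ (heS q hq))
    have h2 : (e q * e p).mulVec v = v := hstab _ (hmul _ (heS q hq) _ (heS p hp))
    have hrel : e p * e q = ((chiP p q : ℂ)) • (e q * e p) := by
      rw [hcp, hdq, Matrix.smul_mul, Matrix.mul_smul, Matrix.smul_mul, Matrix.mul_smul,
        pauliOp_swap p q, smul_smul, smul_smul, smul_smul, smul_smul]
      congr 1
      rw [chiP]
      ring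
    have h3 : v = ((chiP p q : ℂ)) • v := by
      conv_lhs => rw [← h1]
      rw [hrel, Matrix.smul_mulVec, h2]
    have h4 : ((chiP p q : ℂ) - 1) • v = 0 := by
      rw [sub_smul, one_smul, ← h3, sub_self]
    rcases smul_eq_zero.mp h4 with h5 | h5
    · have : (chiP p q : ℂ) = 1 := by linear_combination h5
      exact_mod_cast this
    · exact absurd h5 hv0
  have hwt3 : ∀ p ∈ P, p ≠ (fun _ => 0) → 3 ≤ wtP p := by
    intro p hp hne
    by_contra hlt
    push_neg at hlt
    have hz := hAME p hne (by rw [ncard_supp]; omega)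
    obtain ⟨c, hc, hcp⟩ := hesign p
    have h1 : star v ⬝ᵥ (e p).mulVec v = 1 := by rw [hstab _ (heS p hp)]; exact hv
    rw [hcp, Matrix.smul_mulVec, dotProduct_smul, smul_eq_mul, hz, mul_zero] at h1
    exact one_ne_zero h1.symm
  obtain ⟨core1, core0, core3, core4, core5⟩ := core P h0P hPcard hclosed hcomm hwt3
  -- conversions
  have convW : ∀ w : ℕ, {σ ∈ (S : Set (Matrix (Fin 5 → Fin 2) (Fin 5 → Fin 2) ℂ)) | hasWeight σ w}
      = e '' ↑(P.filter (fun p => wtP p = w)) := by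
    intro w
    ext σ
    simp only [Set.mem_setOf_eq, Set.mem_image, Finset.coe_filter, Finset.mem_coe]
    constructor
    · rintro ⟨hσS, ε, q, hε, rfl, hn⟩
      have hqP : q ∈ P := hmemP ε q hε hσS
      obtain ⟨c, hc, hcp⟩ := hesign q
      have hce : c = ε := by
        by_contra hne
        have hflip : e q = -(ε • pauliOp q) := by
          rw [hcp]
          rcases hc with rfl | rfl <;> rcases hε with rfl | rfl <;>
            first
              | exact absurd rfl hne
              | module
        exact hnotboth _ hσS (by rw [← hflip]; exact heS q hqP)
      refine ⟨q, ⟨hqP, by rw [← ncard_supp]; exact hn⟩, ?_⟩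
      rw [hcp, hce]
    · rintro ⟨q, ⟨hqP, hqw⟩, rfl⟩
      obtain ⟨c, hc, hcp⟩ := hesign q
      exact ⟨heS q hqP, c, q, hc, hcp, by rw [ncard_supp]; exact hqw⟩
  have suppset : ∀ q : Fin 5 → Fin 4, {i | q i ≠ 0} = ↑(suppP q) := by
    intro q; ext i; simp [suppP]
  have convT : ∀ T : Finset (Fin 5),
      {σ ∈ (S : Set (Matrix (Fin 5 → Fin 2) (Fin 5 → Fin 2) ℂ)) |
        ∃ (ε : ℂ) (p : Fin 5 → Fin 4), (ε = 1 ∨ ε = -1) ∧ σ = ε • pauliOp p ∧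
          {i | p i ≠ 0} = (T : Set (Fin 5))}
      = e '' ↑(P.filter (fun p => suppP p = T)) := by
    intro T
    ext σ
    simp only [Set.mem_setOf_eq, Set.mem_image, Finset.coe_filter, Finset.mem_coe]
    constructor
    · rintro ⟨hσS, ε, q, hε, rfl, hn⟩
      have hqP : q ∈ P := hmemP ε q hε hσS
      obtain ⟨c, hc, hcp⟩ := hesign q
      have hce : c = ε := by
        by_contra hne
        have hflip : e q = -(ε • pauliOp q) := by
          rw [hcp]
          rcases hc with rfl | rfl <;> rcases hε with rfl | rfl <;>
            first
              | exact absurd rfl hne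
              | module
        exact hnotboth _ hσS (by rw [← hflip]; exact heS q hqP)
      refine ⟨q, ⟨hqP, ?_⟩, by rw [hcp, hce]⟩
      rw [suppset q] at hn
      exact_mod_cast Finset.coe_inj.mp hn
    · rintro ⟨q, ⟨hqP, hqT⟩, rfl⟩
      obtain ⟨c, hc, hcp⟩ := hesign q
      exact ⟨heS q hqP, c, q, hc, hcp, by rw [suppset q, hqT]⟩
  have ncard_conv : ∀ (Q : Finset (Fin 5 → Fin 4)), Q ⊆ P → (e '' ↑Q).ncard = Q.card := by
    intro Q hQ
    rw [Set.ncard_image_of_injOn (hinj.mono (by exact_mod_cast hQ)), Set.ncard_coe_finset]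
  refine ⟨?_, ?_, ?_, ?_, ?_⟩
  · intro T hT
    rw [convT T, ncard_conv _ (Finset.filter_subset _ _)]
    exact core1 T hT
  · rw [convW 0, ncard_conv _ (Finset.filter_subset _ _)]; exact core0
  · rw [convW 3, ncard_conv _ (Finset.filter_subset _ _)]; exact core3
  · rw [convW 4, ncard_conv _ (Finset.filter_subset _ _)]; exact core4
  · rw [convW 5, ncard_conv _ (Finset.filter_subset _ _)]; exact core5
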